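/- Let yⱼ ≥ 0, κⱼ > 0, sⱼ ≥ rⱼ > 0, ωⱼ ≥ 1 for all j ≥ 0, and A ≥ 1 with y_{j+1} ≤ A^{ωⱼ/κⱼ}(yⱼ^{rⱼ} + yⱼ^{sⱼ})^{1/κⱼ} for all j ≥ 0. Set βⱼ = rⱼ/κⱼ, γⱼ = sⱼ/κⱼ, and assume ᾱ := Σⱼ ωⱼ/κⱼ < ∞ and that the infinite products Πβⱼ and Πγⱼ converge to positive numbers β̄, γ̄. Then for all j ≥ 1, yⱼ ≤ (2A)^{Gⱼ ᾱ} max{ y₀^{γ₀⋯γ_{j-1}}, y₀^{β₀⋯β_{j-1}} }, where Gⱼ = max{1, γ_m γ_{m+1} ⋯ γ_n : 1 ≤ m ≤ n < j}. -/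

import Mathlib

theorem stmt_11 (y κ r s ω : ℕ → ℝ) (A : ℝ)
    (hy : ∀ j, 0 ≤ y j) (hκ : ∀ j, 0 < κ j) (hr : ∀ j, 0 < r j) (hrs : ∀ j, r j ≤ s j)
    (hω : ∀ j, 1 ≤ ω j) (hA : 1 ≤ A)
    (hiter : ∀ j, y (j + 1) ≤ A ^ (ω j / κ j) * (y j ^ r j + y j ^ s j) ^ (1 / κ j))
    (β γ : ℕ → ℝ) (hβ : ∀ j, β j = r j / κ j) (hγ : ∀ j, γ j = s j / κ j)
    (αbar : ℝ) (hαbar : HasSum (fun j => ω j / κ j) αbar)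
    (βbar γbar : ℝ) (hβbar : 0 < βbar) (hγbar : 0 < γbar)
    (hβprod : Filter.Tendsto (fun J => ∏ j ∈ Finset.range J, β j) Filter.atTop (nhds βbar))
    (hγprod : Filter.Tendsto (fun J => ∏ j ∈ Finset.range J, γ j) Filter.atTop (nhds γbar))
    (G : ℕ → ℝ)
    (hG : ∀ j, G j = sSup ({1} ∪ {x : ℝ | ∃ m n : ℕ, 1 ≤ m ∧ m ≤ n ∧ n < j ∧
      x = ∏ i ∈ Finset.Icc m n, γ i})) :
    ∀ j : ℕ, 1 ≤ j →
      y j ≤ (2 * A) ^ (G j * αbar) *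
        max (y 0 ^ (∏ i ∈ Finset.range j, γ i)) (y 0 ^ (∏ i ∈ Finset.range j, β i)) := by
  have hβpos : ∀ j, 0 < β j := fun j => by rw [hβ j]; exact div_pos (hr j) (hκ j)
  have hγpos : ∀ j, 0 < γ j := fun j => by
    rw [hγ j]; exact div_pos (lt_of_lt_of_le (hr j) (hrs j)) (hκ j)
  have hβγ : ∀ j, β j ≤ γ j := fun j => by
    rw [hβ j, hγ j]; exact (div_le_div_iff_of_pos_right (hκ j)).mpr (hrs j)
  have h2A : (1:ℝ) ≤ 2 * A := by linarith
  have h2A0 : (0:ℝ) ≤ 2 * A := le_trans zero_le_one h2A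
  have hA0 : (0:ℝ) ≤ A := le_trans zero_le_one hA
  -- products
  set B : ℕ → ℝ := fun j => ∏ i ∈ Finset.range j, β i with hBdef
  set C : ℕ → ℝ := fun j => ∏ i ∈ Finset.range j, γ i with hCdef
  have hBpos : ∀ j, 0 < B j := fun j => Finset.prod_pos (fun i _ => hβpos i)
  have hCpos : ∀ j, 0 < C j := fun j => Finset.prod_pos (fun i _ => hγpos i)
  have hBC : ∀ j, B j ≤ C j := fun j =>
    Finset.prod_le_prod (fun i _ => (hβpos i).le) (fun i _ => hβγ i)
  -- key comparison lemma
  have key : ∀ p q rr : ℝ, 0 < p → p ≤ q → q ≤ rr →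
      y 0 ^ q ≤ max (y 0 ^ rr) (y 0 ^ p) := by
    intro p q rr hp hpq hqr
    rcases eq_or_lt_of_le (hy 0) with h0 | h0
    · rw [← h0, Real.zero_rpow (ne_of_gt (lt_of_lt_of_le hp hpq))]
      exact le_trans (Real.rpow_nonneg (le_refl 0) rr) (le_max_left _ _)
    · rcases le_total (y 0) 1 with h1 | h1
      · exact le_max_of_le_right (Real.rpow_le_rpow_of_exponent_ge h0 h1 hpq)
      · exact le_max_of_le_left (Real.rpow_le_rpow_of_exponent_le h1 hqr)
  -- G facts
  have hGfin : ∀ j, ({(1:ℝ)} ∪ {x : ℝ | ∃ m n : ℕ, 1 ≤ m ∧ m ≤ n ∧ n < j ∧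
      x = ∏ i ∈ Finset.Icc m n, γ i}).Finite := by
    intro j
    apply Set.Finite.union (Set.finite_singleton 1)
    apply Set.Finite.subset
      (Set.Finite.image (fun p : ℕ × ℕ => ∏ i ∈ Finset.Icc p.1 p.2, γ i)
        ((Set.finite_Iio j).prod (Set.finite_Iio j)))
    rintro x ⟨m, n, _, h2, h3, rfl⟩
    exact ⟨(m, n), ⟨lt_of_le_of_lt h2 h3, h3⟩, rfl⟩
  have hG1 : ∀ j, 1 ≤ G j := fun j => by
    rw [hG j]; exact le_csSup (hGfin j).bddAbove (Or.inl rfl)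
  have hGmem : ∀ j m n, 1 ≤ m → m ≤ n → n < j → ∏ i ∈ Finset.Icc m n, γ i ≤ G j := by
    intro j m n h1 h2 h3
    rw [hG j]
    exact le_csSup (hGfin j).bddAbove (Or.inr ⟨m, n, h1, h2, h3, rfl⟩)
  -- partial sums of ω/κ
  have hterm : ∀ i, 0 ≤ ω i / κ i := fun i =>
    le_of_lt (div_pos (lt_of_lt_of_le zero_lt_one (hω i)) (hκ i))
  have hsum : ∀ j, ∑ i ∈ Finset.range j, ω i / κ i ≤ αbar := fun j =>
    sum_le_hasSum _ (fun i _ => hterm i) hαbar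
  have hα0 : 0 ≤ αbar := le_trans (by simp) (hsum 0)
  -- the exponent sequence
  set E : ℕ → ℝ := fun j => ∑ i ∈ Finset.range j,
    (ω i / κ i) * ∏ l ∈ Finset.Ico (i + 1) j, γ l with hEdef
  have hE0 : ∀ j, 0 ≤ E j := by
    intro j
    apply Finset.sum_nonneg
    intro i _
    exact mul_nonneg (hterm i) (Finset.prod_nonneg (fun l _ => (hγpos l).le))
  have hErec : ∀ j, E (j + 1) = ω j / κ j + γ j * E j := by
    intro j
    simp only [hEdef]
    have hcongr : ∀ i ∈ Finset.range j,
        ω i / κ i * ∏ l ∈ Finset.Ico (i + 1) (j + 1), γ l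
          = γ j * (ω i / κ i * ∏ l ∈ Finset.Ico (i + 1) j, γ l) := by
      intro i hi
      rw [Finset.prod_Ico_succ_top (Nat.succ_le_of_lt (Finset.mem_range.mp hi))]
      ring
    rw [Finset.sum_range_succ, Finset.sum_congr rfl hcongr, ← Finset.mul_sum,
      Finset.Ico_self, Finset.prod_empty, mul_one]
    ring
  have hEle : ∀ j, E j ≤ G j * αbar := by
    intro j
    have step : E j ≤ ∑ i ∈ Finset.range j, (ω i / κ i) * G j := by
      apply Finset.sum_le_sum
      intro i hi
      apply mul_le_mul_of_nonneg_left _ (hterm i)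
      rcases Nat.lt_or_ge (i + 1) j with h | h
      · obtain ⟨k, rfl⟩ := Nat.exists_eq_succ_of_ne_zero (by omega : j ≠ 0)
        rw [Nat.succ_eq_add_one, Finset.Ico_add_one_right_eq_Icc]
        exact hGmem (k + 1) (i + 1) k (Nat.succ_le_succ (Nat.zero_le i))
          (Nat.lt_succ_iff.mp h) (Nat.lt_succ_self k)
      · have : j = i + 1 := le_antisymm h (Finset.mem_range.mp hi)
        rw [this, Finset.Ico_self, Finset.prod_empty]
        exact hG1 _
    calc E j ≤ ∑ i ∈ Finset.range j, (ω i / κ i) * G j := step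
      _ = (∑ i ∈ Finset.range j, ω i / κ i) * G j := by rw [Finset.sum_mul]
      _ ≤ αbar * G j := mul_le_mul_of_nonneg_right (hsum j)
          (le_trans zero_le_one (hG1 j))
      _ = G j * αbar := mul_comm _ _
  -- main induction
  have main : ∀ j, y j ≤ (2 * A) ^ E j * max (y 0 ^ C j) (y 0 ^ B j) := by
    intro j
    induction j with
    | zero =>
      simp only [hEdef, hBdef, hCdef, Finset.range_zero, Finset.sum_empty,
        Finset.prod_empty, Real.rpow_zero, Real.rpow_one, one_mul, max_self]
      exact le_rfl
    | succ j ih =>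
      have hMnn : (0:ℝ) ≤ max (y 0 ^ C j) (y 0 ^ B j) :=
        le_trans (Real.rpow_nonneg (hy 0) _) (le_max_left _ _)
      have hM1nn : (0:ℝ) ≤ max (y 0 ^ C (j+1)) (y 0 ^ B (j+1)) :=
        le_trans (Real.rpow_nonneg (hy 0) _) (le_max_left _ _)
      have hCsucc : C (j + 1) = C j * γ j := Finset.prod_range_succ _ _
      have hBsucc : B (j + 1) = B j * β j := Finset.prod_range_succ _ _
      -- M j ^ e ≤ M (j+1) for β j ≤ e ≤ γ j
      have hMle : ∀ e, β j ≤ e → e ≤ γ j →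
          (max (y 0 ^ C j) (y 0 ^ B j)) ^ e ≤ max (y 0 ^ C (j+1)) (y 0 ^ B (j+1)) := by
        intro e he1 he2
        have he0 : 0 < e := lt_of_lt_of_le (hβpos j) he1
        rw [hCsucc, hBsucc]
        rcases max_cases (y 0 ^ C j) (y 0 ^ B j) with ⟨hEq, _⟩ | ⟨hEq, _⟩ <;>
          rw [hEq, ← Real.rpow_mul (hy 0)]
        · exact key _ _ _ (mul_pos (hBpos j) (hβpos j))
            (mul_le_mul (hBC j) he1 (hβpos j).le (hCpos j).le)
            (mul_le_mul_of_nonneg_left he2 (hCpos j).le)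
        · exact key _ _ _ (mul_pos (hBpos j) (hβpos j))
            (mul_le_mul_of_nonneg_left he1 (hBpos j).le)
            (mul_le_mul (hBC j) he2 (lt_of_lt_of_le (hβpos j) he1).le (hCpos j).le)
      -- single-exponent bound
      have hone : ∀ e, β j ≤ e → e ≤ γ j →
          y j ^ e ≤ (2 * A) ^ (E j * γ j) * max (y 0 ^ C (j+1)) (y 0 ^ B (j+1)) := by
        intro e he1 he2
        have he0 : (0:ℝ) ≤ e := le_trans (hβpos j).le he1
        calc y j ^ e ≤ ((2 * A) ^ E j * max (y 0 ^ C j) (y 0 ^ B j)) ^ e :=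
              Real.rpow_le_rpow (hy j) ih he0
          _ = ((2 * A) ^ E j) ^ e * (max (y 0 ^ C j) (y 0 ^ B j)) ^ e :=
              Real.mul_rpow (Real.rpow_nonneg h2A0 _) hMnn
          _ = (2 * A) ^ (E j * e) * (max (y 0 ^ C j) (y 0 ^ B j)) ^ e := by
              rw [← Real.rpow_mul h2A0]
          _ ≤ (2 * A) ^ (E j * γ j) * max (y 0 ^ C (j+1)) (y 0 ^ B (j+1)) :=
              mul_le_mul
                (Real.rpow_le_rpow_of_exponent_le h2A
                  (mul_le_mul_of_nonneg_left he2 (hE0 j)))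
                (hMle e he1 he2)
                (Real.rpow_nonneg hMnn _)
                (Real.rpow_nonneg h2A0 _)
      -- step bounds
      have hb : (y j ^ r j) ^ (1 / κ j) = y j ^ β j := by
        rw [← Real.rpow_mul (hy j), mul_one_div, ← hβ j]
      have hc : (y j ^ s j) ^ (1 / κ j) = y j ^ γ j := by
        rw [← Real.rpow_mul (hy j), mul_one_div, ← hγ j]
      have hmaxeq : (max (y j ^ r j) (y j ^ s j)) ^ (1 / κ j)
          = max (y j ^ β j) (y j ^ γ j) := by
        rcases le_total (y j ^ r j) (y j ^ s j) with h | h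
        · rw [max_eq_right h, hc, max_eq_right (by
            rw [← hb, ← hc]
            exact Real.rpow_le_rpow (Real.rpow_nonneg (hy j) _) h (div_pos one_pos (hκ j)).le)]
        · rw [max_eq_left h, hb, max_eq_left (by
            rw [← hb, ← hc]
            exact Real.rpow_le_rpow (Real.rpow_nonneg (hy j) _) h (div_pos one_pos (hκ j)).le)]
      have h2 : y j ^ r j + y j ^ s j ≤ 2 * max (y j ^ r j) (y j ^ s j) := by
        have := le_max_left (y j ^ r j) (y j ^ s j)
        have := le_max_right (y j ^ r j) (y j ^ s j)
        linarith
      have h3 : (y j ^ r j + y j ^ s j) ^ (1 / κ j)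
          ≤ 2 ^ (1 / κ j) * max (y j ^ β j) (y j ^ γ j) := by
        calc (y j ^ r j + y j ^ s j) ^ (1 / κ j)
            ≤ (2 * max (y j ^ r j) (y j ^ s j)) ^ (1 / κ j) :=
              Real.rpow_le_rpow
                (add_nonneg (Real.rpow_nonneg (hy j) _) (Real.rpow_nonneg (hy j) _))
                h2 (div_pos one_pos (hκ j)).le
          _ = 2 ^ (1 / κ j) * (max (y j ^ r j) (y j ^ s j)) ^ (1 / κ j) :=
              Real.mul_rpow (by norm_num)
                (le_trans (Real.rpow_nonneg (hy j) _) (le_max_left _ _))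
          _ = 2 ^ (1 / κ j) * max (y j ^ β j) (y j ^ γ j) := by rw [hmaxeq]
      have hA2 : A ^ (ω j / κ j) * 2 ^ (1 / κ j) ≤ (2 * A) ^ (ω j / κ j) := by
        rw [Real.mul_rpow (by norm_num) hA0, mul_comm (A ^ (ω j / κ j))]
        apply mul_le_mul_of_nonneg_right _ (Real.rpow_nonneg hA0 _)
        exact Real.rpow_le_rpow_of_exponent_le one_le_two
          ((div_le_div_iff_of_pos_right (hκ j)).mpr (hω j))
      have hmax2 : (0:ℝ) ≤ max (y j ^ β j) (y j ^ γ j) :=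
        le_trans (Real.rpow_nonneg (hy j) _) (le_max_left _ _)
      calc y (j + 1) ≤ A ^ (ω j / κ j) * (y j ^ r j + y j ^ s j) ^ (1 / κ j) := hiter j
        _ ≤ A ^ (ω j / κ j) * (2 ^ (1 / κ j) * max (y j ^ β j) (y j ^ γ j)) :=
            mul_le_mul_of_nonneg_left h3 (Real.rpow_nonneg hA0 _)
        _ = (A ^ (ω j / κ j) * 2 ^ (1 / κ j)) * max (y j ^ β j) (y j ^ γ j) := by ring
        _ ≤ (2 * A) ^ (ω j / κ j) * max (y j ^ β j) (y j ^ γ j) :=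
            mul_le_mul_of_nonneg_right hA2 hmax2
        _ ≤ (2 * A) ^ (ω j / κ j) *
            ((2 * A) ^ (E j * γ j) * max (y 0 ^ C (j+1)) (y 0 ^ B (j+1))) := by
            apply mul_le_mul_of_nonneg_left _ (Real.rpow_nonneg h2A0 _)
            exact max_le (hone _ le_rfl (hβγ j)) (hone _ (hβγ j) le_rfl)
        _ = (2 * A) ^ (ω j / κ j + E j * γ j) * max (y 0 ^ C (j+1)) (y 0 ^ B (j+1)) := by
            rw [Real.rpow_add (by linarith : (0:ℝ) < 2 * A)]; ring
        _ = (2 * A) ^ E (j + 1) * max (y 0 ^ C (j+1)) (y 0 ^ B (j+1)) := by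
            rw [hErec j]; ring_nf
  -- conclusion
  intro j hj
  have hMnn : (0:ℝ) ≤ max (y 0 ^ C j) (y 0 ^ B j) :=
    le_trans (Real.rpow_nonneg (hy 0) _) (le_max_left _ _)
  calc y j ≤ (2 * A) ^ E j * max (y 0 ^ C j) (y 0 ^ B j) := main j
    _ ≤ (2 * A) ^ (G j * αbar) * max (y 0 ^ C j) (y 0 ^ B j) :=
        mul_le_mul_of_nonneg_right
          (Real.rpow_le_rpow_of_exponent_le h2A (hEle j)) hMnn
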